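/- Let P be a nonempty polyhedral set in ℝ^d, G ⊆ H nonempty faces of P, x_1 ∈ relint G, and let F be a face with G ⊆ F ⊆ H. Define F* = pos((F - x_1) ∩ L(G)^⊥) and H* = pos((H - x_1) ∩ L(G)^⊥), where L(G) is the direction space of G. Then F* is a face of the polyhedral cone H*, every face of H* arises in this way from some face F with G ⊆ F ⊆ H, and dim F* = dim F - dim G. -/

import Mathlib

open RealInnerProductSpace Pointwise

noncomputable section

abbrev Euc (d : ℕ) := EuclideanSpace ℝ (Fin d)

/-- A polyhedral set: intersection of finitely many closed half-spaces. -/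
def IsPolyhedral {d : ℕ} (P : Set (Euc d)) : Prop :=
  ∃ s : Finset (Euc d × ℝ), P = {x | ∀ h ∈ s, ⟪h.1, x⟫ ≤ h.2}

/-- A (nonempty) face of a convex set: a nonempty convex extreme subset. -/
def IsFaceOf {d : ℕ} (P F : Set (Euc d)) : Prop :=
  F.Nonempty ∧ Convex ℝ F ∧ IsExtreme ℝ P F

/-- The normal cone of `P` at the face `F`. -/
def normalCone {d : ℕ} (P F : Set (Euc d)) : Set (Euc d) :=
  {u | ∀ f ∈ F, ∀ z ∈ P, ⟪u, z - f⟫ ≤ 0}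

/-- The dimension of a set: the rank of the direction of its affine hull. -/
def sdim {d : ℕ} (F : Set (Euc d)) : ℕ :=
  Module.finrank ℝ (affineSpan ℝ F).direction

/-- φ_P(x) = Σ_{F face of P} (-1)^{dim F} 1_{F - N(P,F)}(x). -/
def phi {d : ℕ} (P : Set (Euc d)) (x : Euc d) : ℤ :=
  ∑ᶠ F ∈ {F : Set (Euc d) | IsFaceOf P F},
    (-1 : ℤ) ^ sdim F * (F - normalCone P F).indicator (fun _ => (1 : ℤ)) x

/-- A set is line-free if it contains no affine line. -/
def LineFree {d : ℕ} (P : Set (Euc d)) : Prop :=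
  ∀ x y : Euc d, y ≠ 0 → ∃ t : ℝ, x + t • y ∉ P

/-- The positive hull (cone) generated by a set containing `0`:
`coneOf A = ⋃_{t>0} t • A`. -/
def coneOf {d : ℕ} (A : Set (Euc d)) : Set (Euc d) :=
  {y | ∃ t : ℝ, 0 < t ∧ ∃ a ∈ A, y = t • a}

lemma subset_coneOf {d} (A : Set (Euc d)) : A ⊆ coneOf A :=
  fun a ha => ⟨1, one_pos, a, ha, (one_smul _ _).symm⟩

lemma coneOf_smul_mem {d} {A : Set (Euc d)} {y : Euc d} (hy : y ∈ coneOf A) {c : ℝ}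
    (hc : 0 < c) : c • y ∈ coneOf A := by
  obtain ⟨t, ht, a, ha, rfl⟩ := hy
  exact ⟨c * t, by positivity, a, ha, smul_smul c t a⟩

lemma coneOf_mono {d} {A B : Set (Euc d)} (h : A ⊆ B) : coneOf A ⊆ coneOf B := by
  rintro y ⟨t, ht, a, ha, rfl⟩; exact ⟨t, ht, a, h ha, rfl⟩

lemma convex_coneOf {d} {A : Set (Euc d)} (hA : Convex ℝ A) : Convex ℝ (coneOf A) := by
  intro x hx y hy a b ha hb hab
  rcases eq_or_lt_of_le ha with rfl | ha'
  · have : b = 1 := by linarith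
    simpa [this] using hy
  rcases eq_or_lt_of_le hb with rfl | hb'
  · have : a = 1 := by linarith
    simpa [this] using hx
  obtain ⟨t, ht, u, hu, rfl⟩ := hx
  obtain ⟨s, hs, v, hv, rfl⟩ := hy
  have hr : (0:ℝ) < a * t + b * s := by positivity
  refine ⟨a * t + b * s, hr, (a*t/(a*t+b*s)) • u + (b*s/(a*t+b*s)) • v,
    hA hu hv (by positivity) (by positivity) (by field_simp), ?_⟩
  rw [smul_add, smul_smul, smul_smul, smul_smul, smul_smul]
  congr 1 <;> [skip; skip] <;> congr 1 <;> field_simp <;> ring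

lemma mem_sub_singleton {d} {X : Set (Euc d)} {x y : Euc d} :
    y ∈ X - {x} ↔ x + y ∈ X := by
  rw [Set.sub_singleton]
  constructor
  · rintro ⟨z, hz, rfl⟩; simpa using hz
  · intro h; exact ⟨x + y, h, add_sub_cancel_left x y⟩

lemma relint_push {d} {A : Set (Euc d)} {x : Euc d} (hx : x ∈ intrinsicInterior ℝ A)
    {l : Euc d} (hl : l ∈ (affineSpan ℝ A).direction) : ∃ δ : ℝ, 0 < δ ∧ x + δ • l ∈ A := by
  obtain ⟨x', hx', hxx⟩ := hx
  have hxa : x ∈ affineSpan ℝ A := hxx ▸ x'.2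
  have hmem : ∀ δ : ℝ, x + δ • l ∈ affineSpan ℝ A := by
    intro δ
    have := AffineSubspace.vadd_mem_of_mem_direction
      (Submodule.smul_mem _ δ hl) hxa
    simpa [add_comm] using this
  set c : ℝ → affineSpan ℝ A := fun δ => ⟨x + δ • l, hmem δ⟩ with hc
  have hcont : Continuous c := by
    apply Continuous.subtype_mk; continuity
  have hc0 : c 0 = x' := by apply Subtype.ext; simp [hc, hxx]
  have hopen : IsOpen (c ⁻¹' interior ((↑) ⁻¹' A : Set (affineSpan ℝ A))) :=
    isOpen_interior.preimage hcont
  have h0 : (0:ℝ) ∈ c ⁻¹' interior ((↑) ⁻¹' A) := by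
    simp only [Set.mem_preimage, hc0]; exact hx'
  obtain ⟨ε, hε, hball⟩ := Metric.isOpen_iff.1 hopen 0 h0
  refine ⟨ε/2, by positivity, ?_⟩
  have : c (ε/2) ∈ interior ((↑) ⁻¹' A : Set (affineSpan ℝ A)) := by
    apply hball
    rw [Metric.mem_ball, Real.dist_eq, sub_zero, abs_of_pos (by positivity : (0:ℝ) < ε/2)]
    linarith
  have := interior_subset this
  simpa [hc] using this

/-- extreme subsets of a positively-scaling-closed set containing 0 are closed
under positive scaling -/
lemma extreme_smul_mem {d} {C S : Set (Euc d)} (hS : IsExtreme ℝ C S) (h0 : (0:Euc d) ∈ C)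
    (hCs : ∀ y ∈ C, ∀ c : ℝ, 0 < c → c • y ∈ C) {s : Euc d} (hs : s ∈ S) {c : ℝ}
    (hc : 0 < c) : c • s ∈ S := by
  rcases lt_trichotomy c 1 with h | rfl | h
  · -- c < 1 : s = ½(c•s) + ½((2-c)•s)
    have h2 : (0:ℝ) < 2 - c := by linarith
    have hmem : s ∈ openSegment ℝ (c • s) ((2 - c) • s) :=
      ⟨1/2, 1/2, by norm_num, by norm_num, by norm_num, by
        rw [smul_smul, smul_smul, ← add_smul]
        have : 1 / 2 * c + 1 / 2 * (2 - c) = 1 := by ring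
        rw [this, one_smul]⟩
    exact (hS.2 (hCs s (hS.1 hs) c hc) (hCs s (hS.1 hs) _ h2) hs hmem)
  · simpa using hs
  · have hmem : s ∈ openSegment ℝ (c • s) (0 : Euc d) :=
      ⟨1/c, 1 - 1/c, by positivity, by
        have : 1/c < 1 := by rw [div_lt_one (by linarith)]; linarith
        linarith, by ring, by
        rw [smul_smul, smul_zero, add_zero, one_div, inv_mul_cancel₀ (by linarith), one_smul]⟩
    exact (hS.2 (hCs s (hS.1 hs) c hc) h0 hs hmem)

lemma convex_step {d} {X : Set (Euc d)} (hX : Convex ℝ X) {x z : Euc d} (hx : x ∈ X)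
    (hz : x + z ∈ X) {c : ℝ} (hc : 0 < c) (hc1 : c ≤ 1) : x + c • z ∈ X := by
  have := hX hx hz (by linarith : (0:ℝ) ≤ 1 - c) hc.le (by ring)
  have e : (1 - c) • x + c • (x + z) = x + c • z := by
    rw [smul_add, ← add_assoc, ← add_smul, sub_add_cancel, one_smul]
  rwa [e] at this

lemma star_face {d} {P F H : Set (Euc d)} (K : Submodule ℝ (Euc d))
    (hH : IsFaceOf P H) (hF : IsFaceOf P F) (hFH : F ⊆ H)
    {x₁ : Euc d} (hx₁F : x₁ ∈ F) :
    IsFaceOf (coneOf ((H - {x₁}) ∩ (K : Set (Euc d))))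
      (coneOf ((F - {x₁}) ∩ (K : Set (Euc d)))) := by
  have hx₁H : x₁ ∈ H := hFH hx₁F
  have h0F : (0 : Euc d) ∈ (F - {x₁}) ∩ (K : Set (Euc d)) :=
    ⟨mem_sub_singleton.2 (by simpa using hx₁F), Submodule.zero_mem K⟩
  refine ⟨⟨0, subset_coneOf _ h0F⟩, convex_coneOf ((hF.2.1.sub (convex_singleton x₁)).inter (K.convex)), ?_, ?_⟩
  · exact coneOf_mono (Set.inter_subset_inter_left _
      (Set.sub_subset_sub_right hFH))
  rintro a ha b hb x hx hseg
  obtain ⟨s, hs, u, hu, rfl⟩ := ha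
  obtain ⟨t, ht, v, hv, rfl⟩ := hb
  obtain ⟨σ, hσ, w, hw, rfl⟩ := hx
  obtain ⟨lx, ly, hlx, hly, hlxy, heq⟩ := hseg
  set μ : ℝ := (1 + s + t + σ)⁻¹ with hμ
  have hspos : (0:ℝ) < 1 + s + t + σ := by linarith
  have hμpos : (0:ℝ) < μ := by positivity
  -- the three shifted points
  have hxw : x₁ + w ∈ F := mem_sub_singleton.1 hw.1
  have hxu : x₁ + u ∈ H := mem_sub_singleton.1 hu.1
  have hxv : x₁ + v ∈ H := mem_sub_singleton.1 hv.1
  have key : ∀ (c : ℝ) (z : Euc d) (X : Set (Euc d)), Convex ℝ X → x₁ ∈ X → x₁ + z ∈ X →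
      0 < c → c ≤ 1 → x₁ + c • z ∈ X := by
    intro c z X hX hx1 hz hc hc1
    have := hX hx1 hz (by linarith : (0:ℝ) ≤ 1 - c) hc.le (by ring)
    have e : (1 - c) • x₁ + c • (x₁ + z) = x₁ + c • z := by
      rw [smul_add, ← add_assoc, ← add_smul]
      rw [sub_add_cancel, one_smul]
    rwa [e] at this
  have hμσ : μ * σ ≤ 1 := by
    rw [hμ, inv_mul_le_iff₀ hspos]; nlinarith
  have hμs : μ * s ≤ 1 := by
    rw [hμ, inv_mul_le_iff₀ hspos]; nlinarith
  have hμt : μ * t ≤ 1 := by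
    rw [hμ, inv_mul_le_iff₀ hspos]; nlinarith
  have hmF : x₁ + (μ * σ) • w ∈ F :=
    key _ _ _ hF.2.1 hx₁F hxw (by positivity) hμσ
  have hmA : x₁ + (μ * s) • u ∈ H :=
    key _ _ _ hH.2.1 hx₁H hxu (by positivity) hμs
  have hmB : x₁ + (μ * t) • v ∈ H :=
    key _ _ _ hH.2.1 hx₁H hxv (by positivity) hμt
  -- the segment relation
  have hseg2 : x₁ + (μ * σ) • w ∈ openSegment ℝ (x₁ + (μ * s) • u) (x₁ + (μ * t) • v) := by
    refine ⟨lx, ly, hlx, hly, hlxy, ?_⟩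
    have : lx • (x₁ + (μ * s) • u) + ly • (x₁ + (μ * t) • v)
        = (lx + ly) • x₁ + μ • (lx • s • u + ly • t • v) := by
      simp only [smul_add, smul_smul]; module
    rw [this, heq, hlxy, one_smul, smul_smul]
  have hPH : H ⊆ P := hH.2.2.1
  have hext := hF.2.2.2 (hPH hmA) (hPH hmB) hmF hseg2
  have haF : (μ * s) • u ∈ (F - {x₁}) ∩ (K : Set (Euc d)) := by
    refine ⟨mem_sub_singleton.2 hext, ?_⟩
    exact Submodule.smul_mem K _ hu.2
  have hbF : (μ * t) • v ∈ (F - {x₁}) ∩ (K : Set (Euc d)) := by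
    refine ⟨mem_sub_singleton.2 (hF.2.2.right_mem_of_mem_openSegment (hPH hmA) (hPH hmB) hmF hseg2), ?_⟩
    exact Submodule.smul_mem K _ hv.2
  · refine ⟨μ⁻¹, ?_, (μ * s) • u, haF, ?_⟩
    · positivity
    · rw [smul_smul]
      congr 1
      field_simp

lemma sdim_of_zero_mem {d} {A : Set (Euc d)} (h0 : (0 : Euc d) ∈ A) :
    sdim A = Module.finrank ℝ (Submodule.span ℝ A) := by
  have h : (affineSpan ℝ A).direction = Submodule.span ℝ A := by
    rw [direction_affineSpan, vectorSpan_eq_span_vsub_set_right ℝ h0]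
    congr 1
    simp [Set.image_id']
  unfold sdim
  rw [h]

lemma sub_image_eq {d} (X : Set (Euc d)) (x : Euc d) :
    X - {x} = (fun v => v - x) '' X := Set.sub_singleton

lemma star_dim {d} {P G F : Set (Euc d)} (hG : IsFaceOf P G) (hF : IsFaceOf P F)
    (hGF : G ⊆ F) {x₁ : Euc d} (hx₁ : x₁ ∈ intrinsicInterior ℝ G) :
    sdim (coneOf ((F - {x₁}) ∩ ((affineSpan ℝ G).directionᗮ : Set (Euc d)))) =
      sdim F - sdim G := by
  set L := (affineSpan ℝ G).direction with hL
  set A := (F - {x₁}) ∩ (Lᗮ : Set (Euc d)) with hA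
  set V := Submodule.span ℝ A with hV
  set W := Submodule.span ℝ (F - {x₁}) with hW
  have hx₁G : x₁ ∈ G := intrinsicInterior_subset hx₁
  have hx₁F : x₁ ∈ F := hGF hx₁G
  have h0A : (0 : Euc d) ∈ A :=
    ⟨mem_sub_singleton.2 (by simpa using hx₁F), Submodule.zero_mem _⟩
  -- sdim (coneOf A) = finrank V
  have hspan : Submodule.span ℝ (coneOf A) = V := by
    apply le_antisymm
    · rw [Submodule.span_le]
      rintro y ⟨t, ht, a, ha, rfl⟩
      exact Submodule.smul_mem _ _ (Submodule.subset_span ha)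
    · exact Submodule.span_mono (subset_coneOf A)
  have e1 : sdim (coneOf A) = Module.finrank ℝ V := by
    rw [sdim_of_zero_mem (subset_coneOf A h0A), hspan]
  -- sdim F = finrank W
  have e2 : sdim F = Module.finrank ℝ W := by
    have h : (affineSpan ℝ F).direction = W := by
      rw [direction_affineSpan, vectorSpan_eq_span_vsub_set_right ℝ hx₁F, hW, sub_image_eq]
      rfl
    unfold sdim
    rw [h]
  -- V ≤ Lᗮ
  have hVperp : V ≤ Lᗮ := by
    rw [hV, Submodule.span_le]
    exact Set.inter_subset_right
  -- L ≤ W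
  have hLW : L ≤ W := by
    intro l hl
    obtain ⟨δ, hδ, hmem⟩ := relint_push hx₁ hl
    have : δ • l ∈ F - {x₁} := mem_sub_singleton.2 (hGF hmem)
    have h2 : δ • l ∈ W := Submodule.subset_span this
    have := Submodule.smul_mem W δ⁻¹ h2
    rwa [smul_smul, inv_mul_cancel₀ hδ.ne', one_smul] at this
  -- V ≤ W
  have hVW : V ≤ W := Submodule.span_mono Set.inter_subset_left
  -- W ≤ L ⊔ V
  have hWLV : W ≤ L ⊔ V := by
    rw [hW, Submodule.span_le]
    intro y hy
    have hxy : x₁ + y ∈ F := mem_sub_singleton.1 hy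
    set yl : Euc d := (L.orthogonalProjectionOnto y : Euc d) with hyl
    have hylL : yl ∈ L := SetLike.coe_mem _
    have hperp : y - yl ∈ Lᗮ := Submodule.sub_starProjection_mem_orthogonal (K := L) y
    obtain ⟨δ, hδ, hmem⟩ := relint_push hx₁ (Submodule.neg_mem L hylL)
    set c : ℝ := δ / (1 + δ) with hc
    have hδ1 : (0:ℝ) < 1 + δ := by linarith
    have hcpos : 0 < c := by positivity
    have hc1 : c < 1 := by rw [hc, div_lt_one hδ1]; linarith
    have hcombo : (1 - c) • (x₁ + δ • (-yl)) + c • (x₁ + y) = x₁ + c • (y - yl) := by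
      have h1c : 1 - c = 1 / (1 + δ) := by rw [hc]; field_simp; ring
      have hcd : (1 - c) * δ = c := by rw [h1c, hc]; field_simp
      have expand : (1 - c) • (x₁ + δ • (-yl)) + c • (x₁ + y)
          = ((1 - c) + c) • x₁ + c • y - ((1 - c) * δ) • yl := by
        simp only [smul_add, smul_neg, smul_smul]; module
      rw [expand, hcd, sub_add_cancel, one_smul, smul_sub]; abel
    have hpF : x₁ + c • (y - yl) ∈ F :=
      hcombo ▸ hF.2.1 (hGF hmem) hxy (by linarith) hcpos.le (by ring)
    have hcA : c • (y - yl) ∈ A :=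
      ⟨mem_sub_singleton.2 hpF, Submodule.smul_mem Lᗮ _ hperp⟩
    have hyV : y - yl ∈ V := by
      have h2 : c • (y - yl) ∈ V := Submodule.subset_span hcA
      have := Submodule.smul_mem V c⁻¹ h2
      rwa [smul_smul, inv_mul_cancel₀ hcpos.ne', one_smul] at this
    have : y = yl + (y - yl) := by abel
    rw [this]
    exact Submodule.add_mem _ (Submodule.mem_sup_left hylL) (Submodule.mem_sup_right hyV)
  have hWeq : W = L ⊔ V := le_antisymm hWLV (sup_le hLW hVW)
  have hinf : L ⊓ V = ⊥ := by
    rw [eq_bot_iff]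
    refine le_trans (inf_le_inf_left L hVperp) ?_
    rw [← eq_bot_iff.2 (le_refl (⊥ : Submodule ℝ (Euc d)))]
    exact le_of_eq (disjoint_iff.1 (Submodule.orthogonal_disjoint L))
  have hrank := Submodule.finrank_sup_add_finrank_inf_eq L V
  rw [hinf] at hrank
  simp only [finrank_bot, add_zero] at hrank
  have e3 : sdim G = Module.finrank ℝ L := rfl
  rw [e1, e2, e3, hWeq, hrank]
  omega

lemma inner_exp {d} (hv : Euc d) (x z : Euc d) (c : ℝ) :
    ⟪hv, x + c • z⟫ = ⟪hv, x⟫ + c * ⟪hv, z⟫ := by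
  rw [inner_add_right, real_inner_smul_right]

lemma star_surj {d} {P G H : Set (Euc d)} (hP : IsPolyhedral P)
    (hG : IsFaceOf P G) (hH : IsFaceOf P H) (hGH : G ⊆ H)
    {x₁ : Euc d} (hx₁ : x₁ ∈ intrinsicInterior ℝ G)
    (S : Set (Euc d))
    (hS : IsFaceOf (coneOf ((H - {x₁}) ∩ ((affineSpan ℝ G).directionᗮ : Set (Euc d)))) S) :
    ∃ F' : Set (Euc d), IsFaceOf P F' ∧ G ⊆ F' ∧ F' ⊆ H ∧
      S = coneOf ((F' - {x₁}) ∩ ((affineSpan ℝ G).directionᗮ : Set (Euc d))) := by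
  obtain ⟨cs, hcs⟩ := hP
  set L := (affineSpan ℝ G).direction with hLdef
  set K : Set (Euc d) := (Lᗮ : Set (Euc d)) with hKdef
  set Hst := coneOf ((H - {x₁}) ∩ K) with hHst
  have hx₁G : x₁ ∈ G := intrinsicInterior_subset hx₁
  have hx₁H : x₁ ∈ H := hGH hx₁G
  have hHP : H ⊆ P := hH.2.2.1
  have hGP : G ⊆ P := hG.2.2.1
  have hx₁P : x₁ ∈ P := hGP hx₁G
  have h0H : (0 : Euc d) ∈ (H - {x₁}) ∩ K :=
    ⟨mem_sub_singleton.2 (by simpa using hx₁H), Submodule.zero_mem Lᗮ⟩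
  have hSsub : S ⊆ Hst := hS.2.2.1
  have hSsmul : ∀ u ∈ S, ∀ c : ℝ, 0 < c → c • u ∈ S := fun u hu c hc =>
    extreme_smul_mem hS.2.2 (subset_coneOf _ h0H) (fun y hy c' hc' => coneOf_smul_mem hy hc') hu hc
  -- relative interior point of S
  obtain ⟨y, hy⟩ := Set.Nonempty.intrinsicInterior hS.2.1 hS.1
  have hyS : y ∈ S := intrinsicInterior_subset hy
  obtain ⟨ty, hty, ay, hay, hyeq⟩ := hSsub hyS
  have hyK : y ∈ Lᗮ := hyeq ▸ Submodule.smul_mem Lᗮ ty hay.2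
  have hx₁ay : x₁ + ay ∈ H := mem_sub_singleton.1 hay.1
  -- choose ε
  have hev1 : ∀ᶠ ε in nhds (0:ℝ), ε * ty < 1 := by
    have : IsOpen {ε : ℝ | ε * ty < 1} :=
      isOpen_lt (continuous_id.mul continuous_const) continuous_const
    exact this.eventually_mem (by simp)
  have hev2 : ∀ᶠ ε in nhds (0:ℝ), ∀ h ∈ cs, ⟪h.1, x₁⟫ < h.2 →
      ⟪h.1, x₁⟫ + ε * ⟪h.1, y⟫ < h.2 := by
    rw [Filter.eventually_all_finset]
    intro h hmem
    by_cases hlt : ⟪h.1, x₁⟫ < h.2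
    · have : IsOpen {ε : ℝ | ⟪h.1, x₁⟫ + ε * ⟪h.1, y⟫ < h.2} :=
        isOpen_lt (continuous_const.add (continuous_id.mul continuous_const)) continuous_const
      filter_upwards [this.eventually_mem (by simpa using hlt)] with ε hε _
      exact hε
    · filter_upwards with ε hc
      exact absurd hc hlt
  have hcomb : ∀ᶠ ε in nhdsWithin (0:ℝ) (Set.Ioi 0),
      ((ε * ty < 1 ∧ ∀ h ∈ cs, ⟪h.1, x₁⟫ < h.2 → ⟪h.1, x₁⟫ + ε * ⟪h.1, y⟫ < h.2)
        ∧ ε ∈ Set.Ioi (0:ℝ)) :=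
    ((hev1.and hev2).filter_mono nhdsWithin_le_nhds).and self_mem_nhdsWithin
  obtain ⟨ε, ⟨hety, hesep⟩, hεpos⟩ := hcomb.exists
  rw [Set.mem_Ioi] at hεpos
  set x₂ := x₁ + ε • y with hx₂def
  have hx₂H : x₂ ∈ H := by
    have : x₂ = x₁ + (ε * ty) • ay := by rw [hx₂def, hyeq, smul_smul]
    rw [this]
    exact convex_step hH.2.1 hx₁H hx₁ay (by positivity) hety.le
  have hx₂P : x₂ ∈ P := hHP hx₂H
  -- the candidate face
  set F' : Set (Euc d) := {z | z ∈ P ∧ ∀ h ∈ cs, ⟪h.1, x₂⟫ = h.2 → ⟪h.1, z⟫ = h.2}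
    with hF'def
  have hx₂F' : x₂ ∈ F' := ⟨hx₂P, fun h _ ht => ht⟩
  have hPineq : ∀ z ∈ P, ∀ h ∈ cs, ⟪h.1, z⟫ ≤ h.2 := by
    intro z hz h hmem
    rw [hcs] at hz
    exact hz h hmem
  -- tight at x₂ → tight at x₁
  have htight1 : ∀ h ∈ cs, ⟪h.1, x₂⟫ = h.2 → ⟪h.1, x₁⟫ = h.2 := by
    intro h hmem ht
    by_contra hne
    have hlt : ⟪h.1, x₁⟫ < h.2 := lt_of_le_of_ne (hPineq x₁ hx₁P h hmem) hne
    have := hesep h hmem hlt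
    rw [← inner_exp h.1 x₁ y ε] at this
    exact absurd ht (ne_of_lt this)
  -- tight at x₂ → tight on G
  have htightG : ∀ h ∈ cs, ⟪h.1, x₂⟫ = h.2 → ∀ g ∈ G, ⟪h.1, g⟫ = h.2 := by
    intro h hmem ht g hg
    have hx1t := htight1 h hmem ht
    have hdir : x₁ - g ∈ L := by
      have := AffineSubspace.vsub_mem_direction (subset_affineSpan ℝ G hx₁G)
        (subset_affineSpan ℝ G hg)
      simpa using this
    obtain ⟨δ, hδ, hq⟩ := relint_push hx₁ hdir
    have hqP : x₁ + δ • (x₁ - g) ∈ P := hGP hq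
    have h1 := hPineq _ hqP h hmem
    rw [inner_exp, hx1t, inner_sub_right, hx1t] at h1
    have h2 := hPineq g (hGP hg) h hmem
    nlinarith
  -- tight at x₂ → vanishes on S
  have htightS : ∀ h ∈ cs, ⟪h.1, x₂⟫ = h.2 → ∀ u ∈ S, ⟪h.1, u⟫ = 0 := by
    intro h hmem ht
    have hx1t := htight1 h hmem ht
    have hle : ∀ w ∈ Hst, ⟪h.1, w⟫ ≤ 0 := by
      rintro w ⟨t, htpos, a, ha, rfl⟩
      have haH : x₁ + a ∈ P := hHP (mem_sub_singleton.1 ha.1)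
      have := hPineq _ haH h hmem
      rw [inner_add_right, hx1t] at this
      have ha0 : ⟪h.1, a⟫ ≤ 0 := by linarith
      rw [real_inner_smul_right]
      exact mul_nonpos_of_nonneg_of_nonpos htpos.le ha0
    have hy0 : ⟪h.1, y⟫ = 0 := by
      have := ht
      rw [hx₂def, inner_exp, hx1t] at this
      have : ε * ⟪h.1, y⟫ = 0 := by linarith
      rcases mul_eq_zero.1 this with h' | h'
      · exact absurd h' hεpos.ne'
      · exact h'
    intro u hu
    have hud : y - u ∈ (affineSpan ℝ S).direction := by
      have := AffineSubspace.vsub_mem_direction (subset_affineSpan ℝ S hyS)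
        (subset_affineSpan ℝ S hu)
      simpa using this
    obtain ⟨δ, hδ, hpush⟩ := relint_push hy hud
    have h1 := hle _ (hSsub hpush)
    rw [inner_exp, hy0, inner_sub_right, hy0] at h1
    have h2 := hle u (hSsub hu)
    nlinarith
  -- F' is a face of P
  have hfaceF' : IsFaceOf P F' := by
    refine ⟨⟨x₂, hx₂F'⟩, ?_, ?_, ?_⟩
    · -- convex
      intro z hz w hw a b ha hb hab
      constructor
      · have hPc : Convex ℝ P := by
          rw [hcs]
          intro z hz w hw a b ha hb hab h hmem
          have h1 := hz h hmem
          have h2 := hw h hmem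
          rw [Set.mem_setOf_eq] at *
          rw [inner_add_right, real_inner_smul_right, real_inner_smul_right]
          have e1 : a * ⟪h.1, z⟫ ≤ a * h.2 := mul_le_mul_of_nonneg_left h1 ha
          have e2 : b * ⟪h.1, w⟫ ≤ b * h.2 := mul_le_mul_of_nonneg_left h2 hb
          have e3 : a * h.2 + b * h.2 = h.2 := by rw [← add_mul, hab, one_mul]
          linarith
        exact hPc hz.1 hw.1 ha hb hab
      · intro h hmem ht
        rw [inner_add_right, real_inner_smul_right, real_inner_smul_right,
          hz.2 h hmem ht, hw.2 h hmem ht, ← add_mul, hab, one_mul]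
    · exact fun z hz => hz.1
    · rintro a ha b hb z hz ⟨la, lb, hla, hlb, hlab, hseg⟩
      have key : ∀ h ∈ cs, ⟪h.1, x₂⟫ = h.2 → ⟪h.1, a⟫ = h.2 ∧ ⟪h.1, b⟫ = h.2 := by
        intro h hmem ht
        have hza := hPineq a ha h hmem
        have hzb := hPineq b hb h hmem
        have : ⟪h.1, z⟫ = h.2 := hz.2 h hmem ht
        rw [← hseg, inner_add_right, real_inner_smul_right, real_inner_smul_right] at this
        have e1 : la * ⟪h.1, a⟫ ≤ la * h.2 := mul_le_mul_of_nonneg_left hza hla.le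
        have e2 : lb * ⟪h.1, b⟫ ≤ lb * h.2 := mul_le_mul_of_nonneg_left hzb hlb.le
        have e3 : la * h.2 + lb * h.2 = h.2 := by rw [← add_mul, hlab, one_mul]
        constructor
        · by_contra h'
          have hlt : ⟪h.1, a⟫ < h.2 := lt_of_le_of_ne hza h'
          have : la * ⟪h.1, a⟫ < la * h.2 := mul_lt_mul_of_pos_left hlt hla
          linarith
        · by_contra h'
          have hlt : ⟪h.1, b⟫ < h.2 := lt_of_le_of_ne hzb h'
          have : lb * ⟪h.1, b⟫ < lb * h.2 := mul_lt_mul_of_pos_left hlt hlb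
          linarith
      exact ⟨ha, fun h hm ht => (key h hm ht).1⟩
  -- G ⊆ F'
  have hGF' : G ⊆ F' := fun g hg => ⟨hGP hg, fun h hm ht => htightG h hm ht g hg⟩
  -- key auxiliary: z ∈ F' → z ∈ H and pushout in H
  have haux : ∀ z ∈ F', z ∈ H ∧ ∃ δ' : ℝ, 0 < δ' ∧ x₂ + δ' • (x₂ - z) ∈ H := by
    intro z hz
    have hzP : z ∈ P := hz.1
    have hev : ∀ᶠ δ' in nhds (0:ℝ), ∀ h ∈ cs, ⟪h.1, x₂⟫ + δ' * ⟪h.1, x₂ - z⟫ ≤ h.2 := by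
      rw [Filter.eventually_all_finset]
      intro h hmem
      by_cases ht : ⟪h.1, x₂⟫ = h.2
      · filter_upwards with δ'
        rw [inner_sub_right, ht, hz.2 h hmem ht]
        simp
      · have hlt : ⟪h.1, x₂⟫ < h.2 := lt_of_le_of_ne (hPineq _ hx₂P h hmem) ht
        have : IsOpen {δ' : ℝ | ⟪h.1, x₂⟫ + δ' * ⟪h.1, x₂ - z⟫ < h.2} :=
          isOpen_lt (continuous_const.add (continuous_id.mul continuous_const)) continuous_const
        filter_upwards [this.eventually_mem (by simpa using hlt)] with δ' hδ'
        exact le_of_lt hδ'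
    have hcomb2 : ∀ᶠ δ' in nhdsWithin (0:ℝ) (Set.Ioi 0),
        ((∀ h ∈ cs, ⟪h.1, x₂⟫ + δ' * ⟪h.1, x₂ - z⟫ ≤ h.2) ∧ δ' ∈ Set.Ioi (0:ℝ)) :=
      (hev.filter_mono nhdsWithin_le_nhds).and self_mem_nhdsWithin
    obtain ⟨δ', hδ'le, hδ'pos⟩ := hcomb2.exists
    rw [Set.mem_Ioi] at hδ'pos
    have hwP : x₂ + δ' • (x₂ - z) ∈ P := by
      rw [hcs]
      intro h hmem
      rw [Set.mem_setOf_eq] at *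
      rw [inner_exp]
      exact hδ'le h hmem
    -- x₂ ∈ openSegment z w
    set μ : ℝ := (1 + δ')⁻¹ with hμ
    have hμpos : 0 < μ := by positivity
    have hseg : x₂ ∈ openSegment ℝ z (x₂ + δ' • (x₂ - z)) := by
      refine ⟨δ' * μ, μ, by positivity, hμpos, ?_, ?_⟩
      · rw [hμ]; field_simp; ring
      · have expand : (δ' * μ) • z + μ • (x₂ + δ' • (x₂ - z))
            = (δ' * μ - μ * δ') • z + (μ + μ * δ') • x₂ := by
          simp only [smul_add, smul_sub, smul_smul]
          module
        rw [expand]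
        have h1 : δ' * μ - μ * δ' = 0 := by ring
        have h2 : μ + μ * δ' = 1 := by rw [hμ]; field_simp
        rw [h1, h2, zero_smul, one_smul, zero_add]
    have hzH := hH.2.2.2 hzP hwP hx₂H hseg
    exact ⟨hzH, δ', hδ'pos, hH.2.2.right_mem_of_mem_openSegment hzP hwP hx₂H hseg⟩
  have hF'H : F' ⊆ H := fun z hz => (haux z hz).1
  refine ⟨F', hfaceF', hGF', hF'H, ?_⟩
  apply Set.Subset.antisymm
  · -- S ⊆ F'*
    intro u hu
    obtain ⟨tu, htu, au, hau, hueq⟩ := hSsub hu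
    have hauK : au ∈ Lᗮ := hau.2
    have hzH : x₁ + au ∈ H := mem_sub_singleton.1 hau.1
    have hzF' : x₁ + au ∈ F' := by
      refine ⟨hHP hzH, fun h hm ht => ?_⟩
      have hx1t := htight1 h hm ht
      have hu0 : ⟪h.1, u⟫ = 0 := htightS h hm ht u hu
      have hau0 : ⟪h.1, au⟫ = 0 := by
        have : au = tu⁻¹ • u := by rw [hueq, smul_smul, inv_mul_cancel₀ htu.ne', one_smul]
        rw [this, real_inner_smul_right, hu0, mul_zero]
      rw [inner_add_right, hx1t, hau0, add_zero]
    exact ⟨tu, htu, au, ⟨mem_sub_singleton.2 hzF', hauK⟩, hueq⟩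
  · -- F'* ⊆ S
    rintro v ⟨tv, htv, av, hav, rfl⟩
    have havK : av ∈ Lᗮ := hav.2
    have hzF' : x₁ + av ∈ F' := mem_sub_singleton.1 hav.1
    obtain ⟨hzH, δ', hδ', hw'H⟩ := haux _ hzF'
    set w' := x₂ + δ' • (x₂ - (x₁ + av)) with hw'
    have hAeq : w' - x₁ = (ε * (1 + δ')) • y - δ' • av := by
      rw [hw', hx₂def]
      simp only [smul_sub, smul_add, smul_smul]
      module
    have hAK : w' - x₁ ∈ Lᗮ := by
      rw [hAeq]
      exact Submodule.sub_mem _ (Submodule.smul_mem _ _ hyK) (Submodule.smul_mem _ _ havK)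
    have hAH : w' - x₁ ∈ (H - {x₁}) ∩ K := by
      refine ⟨mem_sub_singleton.2 ?_, hAK⟩
      rw [add_sub_cancel]
      exact hw'H
    set α : ℝ := (ε * (1 + δ'))⁻¹ with hα
    have hαpos : 0 < α := by rw [hα]; positivity
    set β : ℝ := δ' * α with hβ
    have hβpos : 0 < β := by positivity
    have hydecomp : y = α • (w' - x₁) + β • av := by
      rw [hAeq, smul_sub, smul_smul, smul_smul, hα, hβ]
      rw [inv_mul_cancel₀ (by positivity : (ε * (1 + δ')) ≠ 0), one_smul]
      have : δ' * (ε * (1 + δ'))⁻¹ = (ε * (1 + δ'))⁻¹ * δ' := by ring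
      rw [this]
      abel
    have havH : av ∈ (H - {x₁}) ∩ K := ⟨mem_sub_singleton.2 (hF'H hzF'), havK⟩
    have h2A : (2 * α) • (w' - x₁) ∈ Hst :=
      coneOf_smul_mem (subset_coneOf _ hAH) (mul_pos two_pos hαpos)
    have h2b : (2 * β) • av ∈ Hst :=
      coneOf_smul_mem (subset_coneOf _ havH) (mul_pos two_pos hβpos)
    have hseg : y ∈ openSegment ℝ ((2 * α) • (w' - x₁)) ((2 * β) • av) := by
      refine ⟨1/2, 1/2, by norm_num, by norm_num, by norm_num, ?_⟩
      rw [smul_smul, smul_smul, hydecomp]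
      congr 1 <;> congr 1 <;> ring
    have hbS : (2 * β) • av ∈ S := hS.2.2.right_mem_of_mem_openSegment h2A h2b hyS hseg
    have := hSsmul _ hbS (tv / (2 * β)) (div_pos htv (mul_pos two_pos hβpos))
    rw [smul_smul] at this
    have heq : tv / (2 * β) * (2 * β) = tv :=
      div_mul_cancel₀ tv (mul_pos two_pos hβpos).ne'
    rwa [heq] at this

theorem faces_of_localized_cone {d : ℕ} (P G H F : Set (Euc d))
    (hP : IsPolyhedral P) (hne : P.Nonempty)
    (hG : IsFaceOf P G) (hH : IsFaceOf P H) (hGH : G ⊆ H)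
    (x₁ : Euc d) (hx₁ : x₁ ∈ intrinsicInterior ℝ G)
    (hF : IsFaceOf P F) (hGF : G ⊆ F) (hFH : F ⊆ H) :
    (IsFaceOf
      (coneOf ((H - {x₁}) ∩ ((affineSpan ℝ G).directionᗮ : Set (Euc d))))
      (coneOf ((F - {x₁}) ∩ ((affineSpan ℝ G).directionᗮ : Set (Euc d))))) ∧
    (∀ S : Set (Euc d),
      IsFaceOf (coneOf ((H - {x₁}) ∩ ((affineSpan ℝ G).directionᗮ : Set (Euc d)))) S →
      ∃ F' : Set (Euc d), IsFaceOf P F' ∧ G ⊆ F' ∧ F' ⊆ H ∧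
        S = coneOf ((F' - {x₁}) ∩ ((affineSpan ℝ G).directionᗮ : Set (Euc d)))) ∧
    sdim (coneOf ((F - {x₁}) ∩ ((affineSpan ℝ G).directionᗮ : Set (Euc d)))) =
      sdim F - sdim G := by
  refine ⟨star_face (affineSpan ℝ G).directionᗮ hH hF hFH
      (hGF (intrinsicInterior_subset hx₁)), ?_, star_dim hG hF hGF hx₁⟩
  intro S hS
  exact star_surj hP hG hH hGH hx₁ S hS
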